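/- (Weber) Let f(t) and g(t) be nonzero polynomials in ℤ[t] such that the leading coefficient and the constant term of g(t) are each equal to ±1. If f(t) and g(t) have no common root in an algebraic closure of ℚ, then the quotient ring ℤ[t]/(f(t), g(t)) is a finite group whose order equals |R(f(t), g(t))|. -/

import Mathlib

open Polynomial

noncomputable section

/-- The Sylvester matrix of two polynomials `f, g ∈ ℤ[t]` of degrees `d, e`: the
`(d+e) × (d+e)` matrix whose first `e` rows are the shifted coefficient sequences
`a₀ a₁ ⋯ a_d` of `f` (with `a_k` the coefficient of `t^{d-k}`) and whose last `d` rows are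
the shifted coefficient sequences `b₀ b₁ ⋯ b_e` of `g`. -/
def sylvesterMatrix (f g : Polynomial ℤ) :
    Matrix (Fin (f.natDegree + g.natDegree)) (Fin (f.natDegree + g.natDegree)) ℤ :=
  fun i j =>
    if (i : ℕ) < g.natDegree then
      (if (i : ℕ) ≤ (j : ℕ) ∧ (j : ℕ) ≤ (i : ℕ) + f.natDegree
        then f.coeff (f.natDegree - ((j : ℕ) - (i : ℕ))) else 0)
    else
      (if ((i : ℕ) - g.natDegree) ≤ (j : ℕ) ∧ (j : ℕ) ≤ ((i : ℕ) - g.natDegree) + g.natDegree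
        then g.coeff (g.natDegree - ((j : ℕ) - ((i : ℕ) - g.natDegree))) else 0)

/-- The resultant `R(f,g)` of two polynomials `f, g ∈ ℤ[t]`, the determinant of their
Sylvester matrix. -/
def resultant (f g : Polynomial ℤ) : ℤ :=
  (sylvesterMatrix f g).det

/-- A polynomial `f(t) = Σ_{i=0}^d a_i t^{d-i}` of degree `d` is reciprocal if
`a_i = a_{d-i}` for every `i`. -/
def IsReciprocal (f : Polynomial ℤ) : Prop :=
  ∀ i ≤ f.natDegree, f.coeff i = f.coeff (f.natDegree - i)

namespace WeberAux

open Matrix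

lemma coeff_sum_rev {m : ℕ} (a : Fin m → ℤ) (i₀ : Fin m) :
    (∑ i : Fin m, (C (a i) * X ^ (m - 1 - (i : ℕ)) : ℤ[X])).coeff (m - 1 - (i₀ : ℕ)) = a i₀ := by
  rw [finset_sum_coeff, Finset.sum_eq_single i₀]
  · rw [coeff_C_mul, coeff_X_pow, if_pos rfl, mul_one]
  · intro b _ hb
    have hbv : (b : ℕ) ≠ (i₀ : ℕ) := fun h => hb (Fin.ext h)
    have h1 := b.isLt; have h2 := i₀.isLt
    rw [coeff_C_mul, coeff_X_pow, if_neg (by omega), mul_zero]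
  · intro h; exact absurd (Finset.mem_univ i₀) h

lemma degree_sum_rev_lt (m : ℕ) (a : Fin m → ℤ) :
    (∑ i : Fin m, (C (a i) * X ^ (m - 1 - (i : ℕ)) : ℤ[X])).degree < (m : ℕ) := by
  refine lt_of_le_of_lt (degree_sum_le _ _) ?_
  refine (Finset.sup_lt_iff (by exact_mod_cast WithBot.bot_lt_coe m : (⊥ : WithBot ℕ) < ((m : ℕ) : WithBot ℕ))).2 ?_
  intro i _
  refine lt_of_le_of_lt (degree_C_mul_X_pow_le _ _) ?_
  exact_mod_cast (by have := i.isLt; omega : m - 1 - (i : ℕ) < m)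

lemma sum_rev_eq {m : ℕ} {p : ℤ[X]} (hp : p.degree < (m : ℕ)) :
    (∑ i : Fin m, (C (p.coeff (m - 1 - (i : ℕ))) * X ^ (m - 1 - (i : ℕ)) : ℤ[X])) = p := by
  ext k
  rw [finset_sum_coeff]
  by_cases hk : k < m
  · rw [Finset.sum_eq_single (⟨m - 1 - k, by omega⟩ : Fin m)]
    · rw [coeff_C_mul, coeff_X_pow, if_pos (by simp only [Fin.val_mk]; omega), mul_one]
      congr 1
      simp only [Fin.val_mk]
      omega
    · intro b _ hb
      have hbv : (b : ℕ) ≠ m - 1 - k := fun h => hb (Fin.ext (by simp only [Fin.val_mk]; omega))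
      have h1 := b.isLt
      rw [coeff_C_mul, coeff_X_pow, if_neg (by omega), mul_zero]
    · intro h; exact absurd (Finset.mem_univ _) h
  · rw [Finset.sum_eq_zero (fun (i : Fin m) _ => by
      have := i.isLt
      rw [coeff_C_mul, coeff_X_pow, if_neg (by omega), mul_zero]), eq_comm]
    exact coeff_eq_zero_of_degree_lt (lt_of_lt_of_le hp (by exact_mod_cast Nat.not_lt.mp hk))

lemma degree_mul_lt {p q : ℤ[X]} {a b : ℕ} (hp : p.degree < (a : ℕ)) (hq : q.degree ≤ (b : ℕ)) :
    (p * q).degree < ((a + b : ℕ) : WithBot ℕ) := by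
  rcases eq_or_ne p 0 with rfl | hp0
  · rw [zero_mul, degree_zero]; exact_mod_cast WithBot.bot_lt_coe _
  rcases eq_or_ne q 0 with rfl | hq0
  · rw [mul_zero, degree_zero]; exact_mod_cast WithBot.bot_lt_coe _
  rw [degree_mul, degree_eq_natDegree hp0, degree_eq_natDegree hq0]
  rw [degree_eq_natDegree hp0] at hp
  rw [degree_eq_natDegree hq0] at hq
  have h1 : p.natDegree < a := by exact_mod_cast hp
  have h2 : q.natDegree ≤ b := by exact_mod_cast hq
  exact_mod_cast (by omega : p.natDegree + q.natDegree < a + b)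

/-- the polynomial represented by row `i` of the Sylvester matrix -/
def sylP (f g : ℤ[X]) (i : Fin (f.natDegree + g.natDegree)) : ℤ[X] :=
  if (i : ℕ) < g.natDegree then X ^ (g.natDegree - 1 - (i : ℕ)) * f
  else X ^ (f.natDegree - 1 - ((i : ℕ) - g.natDegree)) * g

lemma sylvester_eq_coeff (f g : ℤ[X]) (i j : Fin (f.natDegree + g.natDegree)) :
    sylvesterMatrix f g i j = (sylP f g i).coeff (f.natDegree + g.natDegree - 1 - (j : ℕ)) := by
  have hi := i.isLt; have hj := j.isLt
  rw [sylvesterMatrix, sylP]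
  by_cases hie : (i : ℕ) < g.natDegree
  · rw [if_pos hie, if_pos hie, coeff_X_pow_mul']
    split_ifs with h1 h2 h2
    · congr 1; omega
    · omega
    · exact (coeff_eq_zero_of_natDegree_lt (by omega)).symm
    · rfl
  · rw [if_neg hie, if_neg hie, coeff_X_pow_mul']
    split_ifs with h1 h2 h2
    · congr 1; omega
    · omega
    · exact (coeff_eq_zero_of_natDegree_lt (by omega)).symm
    · rfl

lemma sylP_degree_lt (f g : ℤ[X]) (i : Fin (f.natDegree + g.natDegree)) :
    (sylP f g i).degree < ((f.natDegree + g.natDegree : ℕ) : WithBot ℕ) := by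
  have hi := i.isLt
  rw [sylP]
  split_ifs with h
  · refine lt_of_lt_of_le (degree_mul_lt (a := g.natDegree - 1 - (i : ℕ) + 1) ?_ degree_le_natDegree) ?_
    · rw [degree_X_pow]; exact_mod_cast Nat.lt_succ_self _
    · exact_mod_cast (by omega : g.natDegree - 1 - (i : ℕ) + 1 + f.natDegree ≤ f.natDegree + g.natDegree)
  · refine lt_of_lt_of_le (degree_mul_lt (a := f.natDegree - 1 - ((i : ℕ) - g.natDegree) + 1) ?_ degree_le_natDegree) ?_
    · rw [degree_X_pow]; exact_mod_cast Nat.lt_succ_self _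
    · exact_mod_cast (by omega : f.natDegree - 1 - ((i : ℕ) - g.natDegree) + 1 + g.natDegree ≤ f.natDegree + g.natDegree)

lemma sylP_mem (f g : ℤ[X]) (i : Fin (f.natDegree + g.natDegree)) :
    sylP f g i ∈ Ideal.span ({f, g} : Set ℤ[X]) := by
  rw [sylP]
  split_ifs with h
  · exact Ideal.mul_mem_left _ _ (Ideal.subset_span (by simp))
  · exact Ideal.mul_mem_left _ _ (Ideal.subset_span (by simp))

/-- reindexing of `Fin (d+e)` as `Fin e ⊕ Fin d` -/
def sylρ (f g : ℤ[X]) : Fin g.natDegree ⊕ Fin f.natDegree ≃ Fin (f.natDegree + g.natDegree) :=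
  finSumFinEquiv.trans (finCongr (Nat.add_comm _ _))

lemma sylρ_inl_val (f g : ℤ[X]) (k : Fin g.natDegree) :
    ((sylρ f g (Sum.inl k)) : ℕ) = (k : ℕ) := by
  simp [sylρ]

lemma sylρ_inr_val (f g : ℤ[X]) (k : Fin f.natDegree) :
    ((sylρ f g (Sum.inr k)) : ℕ) = g.natDegree + (k : ℕ) := by
  simp [sylρ]; omega

lemma sum_sylP (f g : ℤ[X]) (v : Fin (f.natDegree + g.natDegree) → ℤ) :
    (∑ i, C (v i) * sylP f g i)
      = (∑ k : Fin g.natDegree, C (v (sylρ f g (Sum.inl k))) * X ^ (g.natDegree - 1 - (k : ℕ))) * f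
        + (∑ k : Fin f.natDegree, C (v (sylρ f g (Sum.inr k))) * X ^ (f.natDegree - 1 - (k : ℕ))) * g := by
  rw [← Equiv.sum_comp (sylρ f g) (fun i => C (v i) * sylP f g i), Fintype.sum_sum_type]
  congr 1
  · rw [Finset.sum_mul]
    refine Finset.sum_congr rfl fun k _ => ?_
    have hval := sylρ_inl_val f g k
    rw [sylP, hval, if_pos k.isLt, mul_assoc]
  · rw [Finset.sum_mul]
    refine Finset.sum_congr rfl fun k _ => ?_
    have hval := sylρ_inr_val f g k
    have h2 : g.natDegree + (k : ℕ) - g.natDegree = (k : ℕ) := by omega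
    rw [sylP, hval, if_neg (by omega), h2, mul_assoc]


theorem card_quotient_range_eq_natAbs_det {n : ℕ} (ψ : (Fin n → ℤ) →ₗ[ℤ] (Fin n → ℤ))
    (hψ : Function.Injective ψ) :
    Finite ((Fin n → ℤ) ⧸ LinearMap.range ψ) ∧
      Nat.card ((Fin n → ℤ) ⧸ LinearMap.range ψ) = (LinearMap.det ψ).natAbs := by
  classical
  obtain ⟨m, ⟨bM, bN, emb, a, ha⟩⟩ := (LinearMap.range ψ).smithNormalForm (Pi.basisFun ℤ (Fin n))
  have hmn : m = n := by
    have e1 : (Fin m → ℤ) ≃ₗ[ℤ] (Fin n → ℤ) :=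
      (bN.equivFun.symm.trans (LinearEquiv.ofInjective ψ hψ).symm)
    simpa using e1.finrank_eq
  subst hmn
  let τ : Fin m ≃ Fin m := Equiv.ofBijective emb ((Finite.injective_iff_bijective).mp emb.injective)
  have hτ : ∀ i, τ i = emb i := fun i => rfl
  have ha0 : ∀ i, a i ≠ 0 := by
    intro i h
    apply bN.ne_zero i
    have h2 : ((bN i : Fin m → ℤ)) = 0 := by rw [ha i, h, zero_smul]
    exact Subtype.ext h2
  have hNspan : LinearMap.range ψ
      = Submodule.span ℤ (Set.range fun i => (bN i : Fin m → ℤ)) := by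
    have h1 : Submodule.map (LinearMap.range ψ).subtype ⊤ = LinearMap.range ψ :=
      Submodule.map_subtype_top _
    conv_lhs => rw [← h1, ← bN.span_eq, Submodule.map_span, ← Set.range_comp]
    rfl
  have hmem : ∀ x : Fin m → ℤ,
      x ∈ LinearMap.range ψ ↔ ∀ j, a (τ.symm j) ∣ bM.repr x j := by
    intro x
    rw [hNspan, Submodule.mem_span_range_iff_exists_fun]
    constructor
    · rintro ⟨c, rfl⟩ j
      have h2 : (∑ i, c i • ((bN i : Fin m → ℤ)))
          = ∑ j', (c (τ.symm j') * a (τ.symm j')) • bM j' := by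
        rw [← Equiv.sum_comp τ (fun j' => (c (τ.symm j') * a (τ.symm j')) • bM j')]
        refine Finset.sum_congr rfl fun i _ => ?_
        rw [τ.symm_apply_apply, ha i, smul_smul]
        rfl
      rw [h2, bM.repr_sum_self]
      exact ⟨c (τ.symm j), mul_comm _ _⟩
    · intro hx
      choose k hk using hx
      refine ⟨fun i => k (emb i), ?_⟩
      have h2 : (∑ i, (k (emb i)) • ((bN i : Fin m → ℤ)))
          = ∑ j', (bM.repr x j') • bM j' := by
        rw [← Equiv.sum_comp τ (fun j' => ((bM.repr x j') : ℤ) • bM j')]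
        refine Finset.sum_congr rfl fun i _ => ?_
        rw [ha i, smul_smul, hk (τ i), τ.symm_apply_apply, mul_comm]
        rfl
      rw [h2]
      exact bM.sum_repr x
  -- quotient equivalence with a product of ZMod's
  let I' : Submodule ℤ (Fin m → ℤ) := Submodule.pi Set.univ fun j => Ideal.span {a (τ.symm j)}
  have hmap : (LinearMap.range ψ).map (bM.equivFun : (Fin m → ℤ) →ₗ[ℤ] (Fin m → ℤ)) = I' := by
    ext x
    simp only [I', Submodule.mem_map, Submodule.mem_pi, Ideal.mem_span_singleton, Set.mem_univ,
      forall_true_left, LinearEquiv.coe_coe, Module.Basis.equivFun_apply]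
    constructor
    · rintro ⟨y, hy, rfl⟩ j
      exact (hmem y).mp hy j
    · intro h
      refine ⟨∑ j, x j • bM j, (hmem _).mpr fun j => ?_, ?_⟩
      · rw [bM.repr_sum_self]
        exact h j
      · rw [bM.repr_sum_self]
  let q1 := Submodule.Quotient.equiv (LinearMap.range ψ) I' bM.equivFun hmap
  let q2 := Submodule.quotientPi (fun j => (Ideal.span {a (τ.symm j)} : Submodule ℤ ℤ))
  let E : ((Fin m → ℤ) ⧸ LinearMap.range ψ) ≃ (∀ j, ZMod (a (τ.symm j)).natAbs) :=
    (q1.toEquiv.trans q2.toEquiv).trans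
      (Equiv.piCongrRight fun j => (Int.quotientSpanEquivZMod (a (τ.symm j))).toEquiv)
  have hfin : Finite ((Fin m → ℤ) ⧸ LinearMap.range ψ) := by
    haveI : ∀ j : Fin m, NeZero (a (τ.symm j)).natAbs :=
      fun j => ⟨Int.natAbs_ne_zero.mpr (ha0 _)⟩
    exact Finite.of_equiv _ E.symm
  have hcard : Nat.card ((Fin m → ℤ) ⧸ LinearMap.range ψ) = ∏ j, (a (τ.symm j)).natAbs := by
    rw [Nat.card_congr E, Nat.card_pi]
    exact Finset.prod_congr rfl fun j _ => Nat.card_zmod _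
  -- determinant computation
  let w : Fin m → ℤ := fun j => a (τ.symm j)
  let D : (Fin m → ℤ) →ₗ[ℤ] (Fin m → ℤ) := bM.constr ℤ fun j => w j • bM j
  have hDb : ∀ j, D (bM j) = w j • bM j := fun j => bM.constr_basis ℤ _ j
  have hDsum : ∀ x : Fin m → ℤ, D x = ∑ i, (bM.repr x i * w i) • bM i := by
    intro x
    conv_lhs => rw [← bM.sum_repr x]
    rw [map_sum]
    refine Finset.sum_congr rfl fun i _ => ?_
    rw [_root_.map_smul, hDb, smul_smul]
  have hDrepr : ∀ (x : Fin m → ℤ) j, bM.repr (D x) j = bM.repr x j * w j := by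
    intro x j
    rw [hDsum, bM.repr_sum_self]
  have hDinj : Function.Injective D := by
    intro x y hxy
    apply bM.repr.injective
    ext j
    have h2 := congrArg (fun z => bM.repr z j) hxy
    simp only [hDrepr] at h2
    exact mul_right_cancel₀ (ha0 _) h2
  have hrange_eq : LinearMap.range D = LinearMap.range ψ := by
    rw [hNspan, LinearMap.range_eq_map, ← bM.span_eq, Submodule.map_span, ← Set.range_comp]
    congr 1
    have h2 : ((D : (Fin m → ℤ) → (Fin m → ℤ)) ∘ bM) = fun j => w j • bM j :=
      funext fun j => hDb j
    rw [h2]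
    have h3 : (fun i => (bN i : Fin m → ℤ)) = (fun j => w j • bM j) ∘ τ := by
      funext i
      show (bN i : Fin m → ℤ) = w (τ i) • bM (τ i)
      rw [ha i]
      have : w (τ i) = a i := by show a (τ.symm (τ i)) = a i; rw [τ.symm_apply_apply]
      rw [this, hτ]
    rw [h3, Function.Surjective.range_comp τ.surjective]
  have hdet_eq : (LinearMap.det ψ).natAbs = (LinearMap.det D).natAbs := by
    let e1 : (Fin m → ℤ) ≃ₗ[ℤ] LinearMap.range ψ := LinearEquiv.ofInjective ψ hψ
    let e2 : (Fin m → ℤ) ≃ₗ[ℤ] LinearMap.range ψ :=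
      (LinearEquiv.ofInjective D hDinj).trans (LinearEquiv.ofEq _ _ hrange_eq)
    let Eaut : (Fin m → ℤ) ≃ₗ[ℤ] (Fin m → ℤ) := e1.trans e2.symm
    have hcomp : ψ = D ∘ₗ (Eaut : (Fin m → ℤ) →ₗ[ℤ] (Fin m → ℤ)) := by
      apply LinearMap.ext
      intro x
      show ψ x = D (Eaut x)
      have h1 : ∀ z, D z = ((e2 z : LinearMap.range ψ) : Fin m → ℤ) := by
        intro z
        simp [e2, LinearEquiv.ofInjective_apply]
      have h2 : D (e2.symm (e1 x)) = ((e1 x : LinearMap.range ψ) : Fin m → ℤ) := by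
        rw [h1, e2.apply_symm_apply]
      rw [show (Eaut x) = e2.symm (e1 x) from rfl, h2]
      simp [e1, LinearEquiv.ofInjective_apply]
    rw [hcomp, LinearMap.det_comp, Int.natAbs_mul]
    have h3 : (LinearMap.det (Eaut : (Fin m → ℤ) →ₗ[ℤ] (Fin m → ℤ))).natAbs = 1 := by
      rcases Int.isUnit_iff.mp (LinearEquiv.isUnit_det' Eaut) with h | h <;> rw [h] <;> rfl
    rw [h3, mul_one]
  have hdetD : (LinearMap.det D).natAbs = ∏ j, (a (τ.symm j)).natAbs := by
    rw [← LinearMap.det_toMatrix bM]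
    have h2 : LinearMap.toMatrix bM bM D = Matrix.diagonal w := by
      ext i j
      rw [LinearMap.toMatrix_apply, hDb, _root_.map_smul]
      rw [bM.repr_self]
      by_cases h : i = j
      · subst h
        simp [Matrix.diagonal_apply_eq, Finsupp.single_eq_same]
      · simp [Matrix.diagonal_apply_ne _ h, Finsupp.single_eq_of_ne' (Ne.symm h)]
    rw [h2, Matrix.det_diagonal]
    exact map_prod Int.natAbsHom w Finset.univ
  exact ⟨hfin, by rw [hcard, hdet_eq, hdetD]⟩


theorem main_thm (f g : Polynomial ℤ)
    (hf : f ≠ 0) (hg : g ≠ 0)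
    (hlead : g.leadingCoeff = 1 ∨ g.leadingCoeff = -1)
    (hnoroot : ∀ z : AlgebraicClosure ℚ,
      ¬ (Polynomial.aeval z f = 0 ∧ Polynomial.aeval z g = 0)) :
    Finite (Polynomial ℤ ⧸ Ideal.span ({f, g} : Set (Polynomial ℤ))) ∧
    Nat.card (Polynomial ℤ ⧸ Ideal.span ({f, g} : Set (Polynomial ℤ)))
      = (_root_.resultant f g).natAbs := by
  classical
  set I : Ideal ℤ[X] := Ideal.span ({f, g} : Set ℤ[X]) with hIdef
  set u : ℤ := g.leadingCoeff with hu
  have hu2 : u * u = 1 := by rcases hlead with h | h <;> rw [h] <;> ring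
  have hu0 : u ≠ 0 := by intro h; rw [h, mul_zero] at hu2; exact one_ne_zero hu2.symm
  have hCu : (C u : ℤ[X]) ≠ 0 := by simpa using hu0
  set G : ℤ[X] := C u * g with hGdef
  have hG : G.Monic := by
    show G.leadingCoeff = 1
    rw [hGdef, leadingCoeff_mul, leadingCoeff_C, ← hu]
    exact hu2
  have hGdeg : G.natDegree = g.natDegree := by
    rw [hGdef, natDegree_mul hCu hg, natDegree_C, zero_add]
  have hGd : G.degree = ((g.natDegree : ℕ) : WithBot ℕ) := by
    rw [degree_eq_natDegree hG.ne_zero, hGdeg]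
  have hgI : g ∈ I := Ideal.subset_span (by simp)
  have hfI : f ∈ I := Ideal.subset_span (by simp)
  have hsub : ∀ p : ℤ[X], p - p %ₘ G ∈ I := by
    intro p
    rw [modByMonic_eq_sub_mul_div p G, sub_sub_cancel]
    rw [show G * (p /ₘ G) = C u * (p /ₘ G) * g by rw [hGdef]; ring]
    exact Ideal.mul_mem_left _ _ hgI
  -- the coefficient-vector interpretation map
  let θ : (Fin (f.natDegree + g.natDegree) → ℤ) →ₗ[ℤ] ℤ[X] :=
    { toFun := fun v => ∑ j : Fin (f.natDegree + g.natDegree),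
        C (v j) * X ^ (f.natDegree + g.natDegree - 1 - (j : ℕ))
      map_add' := fun v w => by
        show (∑ j : Fin (f.natDegree + g.natDegree),
            C ((v + w) j) * X ^ (f.natDegree + g.natDegree - 1 - (j : ℕ))) = _
        rw [← Finset.sum_add_distrib]
        exact Finset.sum_congr rfl fun j _ => by rw [Pi.add_apply, C_add, add_mul]
      map_smul' := fun c v => by
        show (∑ j : Fin (f.natDegree + g.natDegree),
            C ((c • v) j) * X ^ (f.natDegree + g.natDegree - 1 - (j : ℕ)))
          = c • ∑ j : Fin (f.natDegree + g.natDegree),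
              C (v j) * X ^ (f.natDegree + g.natDegree - 1 - (j : ℕ))
        rw [Finset.smul_sum]
        exact Finset.sum_congr rfl fun j _ => by
          rw [Pi.smul_apply, smul_eq_mul, C_mul, smul_eq_C_mul, mul_assoc] }
  have hθ : ∀ v, θ v = ∑ j : Fin (f.natDegree + g.natDegree),
      C (v j) * X ^ (f.natDegree + g.natDegree - 1 - (j : ℕ)) := fun v => rfl
  have hθdeg : ∀ v, (θ v).degree
      < ((f.natDegree + g.natDegree : ℕ) : WithBot ℕ) := fun v => degree_sum_rev_lt _ _
  have hθcoeff : ∀ v (j : Fin (f.natDegree + g.natDegree)),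
      (θ v).coeff (f.natDegree + g.natDegree - 1 - (j : ℕ)) = v j :=
    fun v j => coeff_sum_rev _ j
  have hθinj : Function.Injective θ := by
    intro v w h
    funext j
    rw [← hθcoeff v j, ← hθcoeff w j, h]
  have hθrev : ∀ p : ℤ[X], p.degree < ((f.natDegree + g.natDegree : ℕ) : WithBot ℕ) →
      θ (fun j => p.coeff (f.natDegree + g.natDegree - 1 - (j : ℕ))) = p := by
    intro p hp
    rw [hθ]
    exact sum_rev_eq hp
  -- the Sylvester linear map
  set A := sylvesterMatrix f g with hA
  let ψ : (Fin (f.natDegree + g.natDegree) → ℤ) →ₗ[ℤ] (Fin (f.natDegree + g.natDegree) → ℤ) :=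
    Matrix.toLin' Aᵀ
  have hψapp : ∀ v j, ψ v j
      = ∑ i, (sylP f g i).coeff (f.natDegree + g.natDegree - 1 - (j : ℕ)) * v i := by
    intro v j
    show Aᵀ.mulVec v j = _
    rw [Matrix.mulVec, dotProduct]
    exact Finset.sum_congr rfl fun i _ => by
      rw [Matrix.transpose_apply, hA, sylvester_eq_coeff]
  have hθψ : ∀ v, θ (ψ v) = ∑ i, C (v i) * sylP f g i := by
    intro v
    rw [hθ]
    calc (∑ j : Fin (f.natDegree + g.natDegree),
            C (ψ v j) * X ^ (f.natDegree + g.natDegree - 1 - (j : ℕ)))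
        = ∑ j : Fin (f.natDegree + g.natDegree), ∑ i, C (v i) *
            (C ((sylP f g i).coeff (f.natDegree + g.natDegree - 1 - (j : ℕ)))
              * X ^ (f.natDegree + g.natDegree - 1 - (j : ℕ))) := by
          refine Finset.sum_congr rfl fun j _ => ?_
          rw [hψapp v j, map_sum, Finset.sum_mul]
          refine Finset.sum_congr rfl fun i _ => ?_
          rw [C_mul]
          ring
      _ = ∑ i, C (v i) * ∑ j : Fin (f.natDegree + g.natDegree),
            C ((sylP f g i).coeff (f.natDegree + g.natDegree - 1 - (j : ℕ)))
              * X ^ (f.natDegree + g.natDegree - 1 - (j : ℕ)) := by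
          rw [Finset.sum_comm]
          exact Finset.sum_congr rfl fun i _ => by rw [Finset.mul_sum]
      _ = ∑ i, C (v i) * sylP f g i := by
          refine Finset.sum_congr rfl fun i _ => ?_
          rw [sum_rev_eq (sylP_degree_lt f g i)]
  -- coprimality over ℚ
  have hcop : IsCoprime (f.map (Int.castRingHom ℚ)) (g.map (Int.castRingHom ℚ)) := by
    by_contra hnc
    have hfq : f.map (Int.castRingHom ℚ) ≠ 0 := by
      rw [Ne, Polynomial.map_eq_zero_iff Int.cast_injective]
      exact hf
    set G0 := EuclideanDomain.gcd (f.map (Int.castRingHom ℚ)) (g.map (Int.castRingHom ℚ))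
      with hG0
    have hG0unit : ¬ IsUnit G0 := fun h => hnc (EuclideanDomain.gcd_isUnit_iff.mp h)
    have hdeg : G0.degree ≠ 0 := fun h => hG0unit (Polynomial.isUnit_iff_degree_eq_zero.mpr h)
    obtain ⟨z, hz⟩ := IsAlgClosed.exists_aeval_eq_zero (AlgebraicClosure ℚ) G0 hdeg
    refine hnoroot z ⟨?_, ?_⟩
    · obtain ⟨c, hc⟩ := EuclideanDomain.gcd_dvd_left (f.map (Int.castRingHom ℚ))
        (g.map (Int.castRingHom ℚ))
      have h2 : (Polynomial.aeval z) (f.map (Int.castRingHom ℚ)) = 0 := by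
        rw [hc, _root_.map_mul, ← hG0, hz, zero_mul]
      rwa [show Int.castRingHom ℚ = algebraMap ℤ ℚ from rfl,
        Polynomial.aeval_map_algebraMap] at h2
    · obtain ⟨c, hc⟩ := EuclideanDomain.gcd_dvd_right (f.map (Int.castRingHom ℚ))
        (g.map (Int.castRingHom ℚ))
      have h2 : (Polynomial.aeval z) (g.map (Int.castRingHom ℚ)) = 0 := by
        rw [hc, _root_.map_mul, ← hG0, hz, zero_mul]
      rwa [show Int.castRingHom ℚ = algebraMap ℤ ℚ from rfl,
        Polynomial.aeval_map_algebraMap] at h2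
  -- the determinant is nonzero
  have hdet : A.det ≠ 0 := by
    intro h0
    obtain ⟨v, hv0, hv⟩ := (Matrix.exists_mulVec_eq_zero_iff (M := Aᵀ)).mpr
      (by rw [Matrix.det_transpose]; exact h0)
    have hψv : ψ v = 0 := by show Matrix.toLin' Aᵀ v = 0; rw [Matrix.toLin'_apply]; exact hv
    have h1 : ∑ i, C (v i) * sylP f g i = 0 := by rw [← hθψ, hψv, map_zero]
    rw [sum_sylP] at h1
    set uu := ∑ k : Fin g.natDegree,
      C (v (sylρ f g (Sum.inl k))) * X ^ (g.natDegree - 1 - (k : ℕ)) with huu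
    set ww := ∑ k : Fin f.natDegree,
      C (v (sylρ f g (Sum.inr k))) * X ^ (f.natDegree - 1 - (k : ℕ)) with hww
    have hvz : ∀ s, v (sylρ f g s) = 0 → True := fun _ _ => trivial
    rcases eq_or_ne uu 0 with h2 | h2
    · rw [h2, zero_mul, zero_add] at h1
      have h3 : ww = 0 := by
        rcases mul_eq_zero.mp h1 with h | h
        · exact h
        · exact absurd h hg
      apply hv0
      funext z
      obtain ⟨s, rfl⟩ := (sylρ f g).surjective z
      cases s with
      | inl k =>
        have h4 := congrArg (fun p : ℤ[X] => p.coeff (g.natDegree - 1 - (k : ℕ))) h2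
        simp only [huu] at h4
        rw [coeff_sum_rev (fun k => v (sylρ f g (Sum.inl k))) k] at h4
        simpa using h4
      | inr k =>
        have h4 := congrArg (fun p : ℤ[X] => p.coeff (f.natDegree - 1 - (k : ℕ))) h3
        simp only [hww] at h4
        rw [coeff_sum_rev (fun k => v (sylρ f g (Sum.inr k))) k] at h4
        simpa using h4
    · have hu_deg : uu.degree < ((g.natDegree : ℕ) : WithBot ℕ) := by
        rw [huu]; exact degree_sum_rev_lt _ _
      have hmul : uu * f = -(ww * g) := eq_neg_of_add_eq_zero_left h1
      have hdvd : (g.map (Int.castRingHom ℚ))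
          ∣ (uu.map (Int.castRingHom ℚ)) * (f.map (Int.castRingHom ℚ)) := by
        refine ⟨-(ww.map (Int.castRingHom ℚ)), ?_⟩
        rw [← Polynomial.map_mul, hmul, Polynomial.map_neg, Polynomial.map_mul]
        ring
      have hgdvduu := (hcop.symm).dvd_of_dvd_mul_right hdvd
      have huu0 : uu.map (Int.castRingHom ℚ) ≠ 0 := by
        rw [Ne, Polynomial.map_eq_zero_iff Int.cast_injective]
        exact h2
      have hdeg1 : (g.map (Int.castRingHom ℚ)).natDegree
          ≤ (uu.map (Int.castRingHom ℚ)).natDegree :=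
        Polynomial.natDegree_le_of_dvd hgdvduu huu0
      have hdeg2 : (uu.map (Int.castRingHom ℚ)).natDegree < g.natDegree := by
        refine lt_of_le_of_lt Polynomial.natDegree_map_le ?_
        have h5 := hu_deg
        rw [degree_eq_natDegree h2] at h5
        exact_mod_cast h5
      have hdeg3 : (g.map (Int.castRingHom ℚ)).natDegree = g.natDegree :=
        Polynomial.natDegree_map_eq_of_injective Int.cast_injective g
      omega
  -- the quotient map
  let hmap : (Fin (f.natDegree + g.natDegree) → ℤ) →ₗ[ℤ] (ℤ[X] ⧸ I) :=
    { toFun := fun v => Ideal.Quotient.mk I (θ v)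
      map_add' := fun v w => by
        show Ideal.Quotient.mk I (θ (v + w))
          = Ideal.Quotient.mk I (θ v) + Ideal.Quotient.mk I (θ w)
        rw [map_add, map_add]
      map_smul' := fun c v => by
        show Ideal.Quotient.mk I (θ (c • v)) = c • Ideal.Quotient.mk I (θ v)
        rw [_root_.map_smul, map_zsmul] }
  have hkereq : LinearMap.ker hmap = LinearMap.range ψ := by
    ext v
    rw [LinearMap.mem_ker]
    show (Ideal.Quotient.mk I (θ v) = 0) ↔ _
    rw [Ideal.Quotient.eq_zero_iff_mem]
    constructor
    · intro hv
      obtain ⟨α, β, hαβ⟩ := Ideal.mem_span_pair.mp hv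
      set α' := α %ₘ G with hα'
      set β' := β + C u * (α /ₘ G) * f with hβ'
      have hre : α' * f + β' * g = θ v := by
        rw [hα', hβ', modByMonic_eq_sub_mul_div α G, hGdef, ← hαβ]
        ring
      have hαdeg : α'.degree < ((g.natDegree : ℕ) : WithBot ℕ) := by
        rw [hα']
        exact lt_of_lt_of_le (degree_modByMonic_lt α hG) (le_of_eq hGd)
      have hβdeg : β'.degree < ((f.natDegree : ℕ) : WithBot ℕ) := by
        rcases eq_or_ne β' 0 with h0 | h0
        · rw [h0, degree_zero]
          exact_mod_cast WithBot.bot_lt_coe _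
        · have hβg : (β' * g).degree
              < ((f.natDegree + g.natDegree : ℕ) : WithBot ℕ) := by
            rw [show β' * g = θ v - α' * f by rw [← hre]; ring]
            refine lt_of_le_of_lt (degree_sub_le _ _) (max_lt (hθdeg v) ?_)
            refine lt_of_lt_of_le (degree_mul_lt hαdeg degree_le_natDegree) ?_
            exact_mod_cast (by omega : g.natDegree + f.natDegree ≤ f.natDegree + g.natDegree)
          have h1 : β'.natDegree + g.natDegree < f.natDegree + g.natDegree := by
            rw [degree_mul, degree_eq_natDegree h0, degree_eq_natDegree hg] at hβg
            exact_mod_cast hβg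
          rw [degree_eq_natDegree h0]
          exact_mod_cast (by omega : β'.natDegree < f.natDegree)
      set w : Fin (f.natDegree + g.natDegree) → ℤ := fun i =>
        if (i : ℕ) < g.natDegree then α'.coeff (g.natDegree - 1 - (i : ℕ))
        else β'.coeff (f.natDegree - 1 - ((i : ℕ) - g.natDegree)) with hwdef
      refine ⟨w, hθinj ?_⟩
      rw [hθψ, sum_sylP, ← hre]
      congr 1
      · congr 1
        rw [Finset.sum_congr rfl (fun (k : Fin g.natDegree) _ => by
          rw [show w (sylρ f g (Sum.inl k)) = α'.coeff (g.natDegree - 1 - (k : ℕ)) by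
            rw [hwdef]
            simp only [sylρ_inl_val]
            rw [if_pos k.isLt]])]
        exact sum_rev_eq hαdeg
      · congr 1
        rw [Finset.sum_congr rfl (fun (k : Fin f.natDegree) _ => by
          rw [show w (sylρ f g (Sum.inr k)) = β'.coeff (f.natDegree - 1 - (k : ℕ)) by
            rw [hwdef]
            simp only [sylρ_inr_val]
            rw [if_neg (by omega)]
            congr 2
            omega])]
        exact sum_rev_eq hβdeg
    · rintro ⟨w, rfl⟩
      rw [hθψ]
      exact Ideal.sum_mem _ fun i _ => Ideal.mul_mem_left _ _ (sylP_mem f g i)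
  have hsurj : Function.Surjective hmap := by
    intro q
    obtain ⟨p, rfl⟩ := Ideal.Quotient.mk_surjective q
    refine ⟨fun j => (p %ₘ G).coeff (f.natDegree + g.natDegree - 1 - (j : ℕ)), ?_⟩
    have hdegm : (p %ₘ G).degree < ((f.natDegree + g.natDegree : ℕ) : WithBot ℕ) := by
      refine lt_of_lt_of_le (lt_of_lt_of_le (degree_modByMonic_lt p hG) (le_of_eq hGd)) ?_
      exact_mod_cast (by omega : g.natDegree ≤ f.natDegree + g.natDegree)
    show Ideal.Quotient.mk I (θ _) = Ideal.Quotient.mk I p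
    rw [hθrev _ hdegm, Ideal.Quotient.mk_eq_mk_iff_sub_mem]
    rw [show p %ₘ G - p = -(p - p %ₘ G) by ring]
    exact neg_mem (hsub p)
  -- assemble the equivalence
  let E : ((Fin (f.natDegree + g.natDegree) → ℤ) ⧸ LinearMap.range ψ) ≃ (ℤ[X] ⧸ I) :=
    ((Submodule.quotEquivOfEq _ _ hkereq.symm).trans
      (hmap.quotKerEquivRange.trans
        (LinearEquiv.ofTop _ (LinearMap.range_eq_top.mpr hsurj)))).toEquiv
  have hψinj : Function.Injective ψ := by
    intro x y hxy
    by_contra hne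
    have h2 : Aᵀ.mulVec (x - y) = 0 := by
      have h3 : ψ (x - y) = 0 := by rw [map_sub, hxy, sub_self]
      rw [← Matrix.toLin'_apply]
      exact h3
    have h4 := Matrix.exists_mulVec_eq_zero_iff.mp ⟨x - y, sub_ne_zero.mpr hne, h2⟩
    rw [Matrix.det_transpose] at h4
    exact hdet h4
  obtain ⟨hfin, hcard⟩ := card_quotient_range_eq_natAbs_det ψ hψinj
  constructor
  · exact Finite.of_equiv _ E
  · rw [← Nat.card_congr E, hcard]
    show (LinearMap.det (Matrix.toLin' Aᵀ)).natAbs = _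
    rw [LinearMap.det_toLin', Matrix.det_transpose]
    rfl

end WeberAux

/-- **Weber.** If `f, g ∈ ℤ[t]` are nonzero, the leading coefficient and the
constant term of `g` are each `±1`, and `f` and `g` have no common root in an algebraic
closure of `ℚ`, then `ℤ[t]/(f, g)` is a finite group of order `|R(f, g)|`. -/
theorem weber_card_quotient_eq_resultant (f g : Polynomial ℤ)
    (hf : f ≠ 0) (hg : g ≠ 0)
    (hlead : g.leadingCoeff = 1 ∨ g.leadingCoeff = -1)
    (hconst : g.coeff 0 = 1 ∨ g.coeff 0 = -1)
    (hnoroot : ∀ z : AlgebraicClosure ℚ,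
      ¬ (Polynomial.aeval z f = 0 ∧ Polynomial.aeval z g = 0)) :
    Finite (Polynomial ℤ ⧸ Ideal.span ({f, g} : Set (Polynomial ℤ))) ∧
    Nat.card (Polynomial ℤ ⧸ Ideal.span ({f, g} : Set (Polynomial ℤ)))
      = (_root_.resultant f g).natAbs := by
  exact WeberAux.main_thm f g hf hg hlead hnoroot
end
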